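/- Let F₂ be the free group on two generators g₁, g₂ and let ℓ²(F₂) be the Hilbert space of square-summable complex-valued functions on F₂. For g ∈ F₂ let L_g and R_g be the left and right translation unitaries on ℓ²(F₂), given by (L_g ξ)(h) = ξ(g⁻¹h) and (R_g ξ)(h) = ξ(hg). Then ‖1 + L_{g₂}R_{g₂} + L_{g₂⁻¹}R_{g₂⁻¹} + L_{g₁}R_{g₁}‖ > ‖1 + L_{g₁}R_{g₂} + L_{g₁⁻¹}R_{g₂⁻¹} + L_{g₂}R_{g₁}‖, where ‖·‖ denotes the operator norm on bounded operators on ℓ²(F₂). -/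

import Mathlib

open scoped ENNReal

noncomputable section

/-- The free group `F₂` on two generators. -/
abbrev F₂ : Type := FreeGroup (Fin 2)

/-- The first generator `g₁` of `F₂`. -/
def g₁ : F₂ := FreeGroup.of 0

/-- The second generator `g₂` of `F₂`. -/
def g₂ : F₂ := FreeGroup.of 1

/-- The Hilbert space `ℓ²(F₂)` of square-summable complex functions on `F₂`. -/
abbrev l2F₂ := lp (fun _ : F₂ => ℂ) 2

lemma memℓp_comp_equiv {α β : Type*} {f : β → ℂ} (e : α ≃ β) (hf : Memℓp f 2) :
    Memℓp (fun a => f (e a)) 2 := by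
  apply memℓp_gen
  exact (e.summable_iff (f := fun b => ‖f b‖ ^ (2 : ℝ≥0∞).toReal)).mpr
    (hf.summable (by norm_num))

/-- The linear isometry of `ℓ²` spaces induced by composition with an equivalence of the
index sets. -/
def lpCompEquiv {α β : Type*} (e : α ≃ β) :
    lp (fun _ : β => ℂ) 2 ≃ₗᵢ[ℂ] lp (fun _ : α => ℂ) 2 where
  toFun f := ⟨fun a => f (e a), memℓp_comp_equiv e (lp.memℓp f)⟩
  invFun f := ⟨fun b => f (e.symm b), memℓp_comp_equiv e.symm (lp.memℓp f)⟩
  left_inv f := by apply lp.ext; funext b; simp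
  right_inv f := by apply lp.ext; funext a; simp
  map_add' f g := by apply lp.ext; funext a; rfl
  map_smul' c f := by apply lp.ext; funext a; rfl
  norm_map' f := by
    rw [lp.norm_eq_tsum_rpow (by norm_num), lp.norm_eq_tsum_rpow (by norm_num)]
    congr 1
    exact e.tsum_eq (fun b => ‖f b‖ ^ (2 : ℝ≥0∞).toReal)

/-- The left translation unitary `L g` on `ℓ²(F₂)`, given by `(L g ξ) h = ξ (g⁻¹ * h)`. -/
def L (g : F₂) : l2F₂ →L[ℂ] l2F₂ :=
  (lpCompEquiv ((Equiv.mulLeft g).symm)).toLinearIsometry.toContinuousLinearMap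

/-- The right translation unitary `R g` on `ℓ²(F₂)`, given by `(R g ξ) h = ξ (h * g)`. -/
def R (g : F₂) : l2F₂ →L[ℂ] l2F₂ :=
  (lpCompEquiv (Equiv.mulRight g)).toLinearIsometry.toContinuousLinearMap

@[simp] lemma L_def (g : F₂) (ξ : l2F₂) (h : F₂) : L g ξ h = ξ (g⁻¹ * h) := rfl

@[simp] lemma R_def (g : F₂) (ξ : l2F₂) (h : F₂) : R g ξ h = ξ (h * g) := rfl



namespace Mag

abbrev Ltr := Fin 2 × Bool
abbrev F2 : Type := FreeGroup (Fin 2)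
def inv' (c : Ltr) : Ltr := (c.1, !c.2)
def cons' (c : Ltr) : List Ltr → List Ltr
  | [] => [c]
  | d :: t => if d = inv' c then t else c :: d :: t

noncomputable def FF (d : ℤ) : ℝ := (2 : ℝ) ^ (-(d : ℝ)/4)

lemma FF_pos (d : ℤ) : 0 < FF d := Real.rpow_pos_of_pos (by norm_num) _
lemma FF_zero : FF 0 = 1 := by simp [FF]
lemma FF_add (m n : ℤ) : FF (m + n) = FF m * FF n := by
  rw [FF, FF, FF, ← Real.rpow_add (by norm_num)]; push_cast; ring_nf
lemma FF_sq (m : ℤ) : FF m ^ 2 = FF (2*m) := by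
  rw [FF, FF, ← Real.rpow_natCast ((2:ℝ) ^ (-(m:ℝ)/4)) 2, ← Real.rpow_mul (by norm_num)]
  push_cast; ring_nf
lemma FF_amgm (m n : ℤ) : FF (m + n) ≤ (FF (2*m) + FF (2*n))/2 := by
  rw [FF_add, ← FF_sq, ← FF_sq]
  nlinarith [sq_nonneg (FF m - FF n)]
lemma FF_m4 : FF (-4) = 2 := by
  rw [FF, show (-((-4:ℤ):ℝ)/4) = 1 by norm_num, Real.rpow_one]
lemma FF_p4 : FF 4 = 1/2 := by
  rw [FF, show (-((4:ℤ):ℝ)/4) = -1 by norm_num, Real.rpow_neg_one]; norm_num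
lemma FF_anti : Antitone FF := by
  intro m n h
  exact Real.rpow_le_rpow_left_iff (x := (2:ℝ)) (by norm_num) |>.mpr (by
    have : (m:ℝ) ≤ n := by exact_mod_cast h
    linarith)

def qpow (d : ℤ) : ℤ := if d < 0 then 4 else if d = 0 then 2 else 1

lemma FFq {d : ℤ} (h : d = -2 ∨ d = 0 ∨ d = 2) : FF (2*d) = (qpow d : ℝ)/2 := by
  rcases h with rfl | rfl | rfl
  · rw [show (2 * (-2 : ℤ)) = -4 by norm_num, FF_m4]; norm_num [qpow]
  · rw [mul_zero, FF_zero]; norm_num [qpow]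
  · rw [show (2 * (2 : ℤ)) = 4 by norm_num, FF_p4]; norm_num [qpow]




open FreeGroup in
lemma toWord_mk_mul (c : Ltr) (x : F2) : (FreeGroup.mk [c] * x).toWord = cons' c x.toWord := by
  conv_lhs => rw [← FreeGroup.mk_toWord (x := x)]
  rw [FreeGroup.mul_mk, FreeGroup.toWord_mk, List.singleton_append, FreeGroup.reduce.cons,
    FreeGroup.reduce_toWord]
  rcases e : x.toWord with _ | ⟨d, t⟩
  · rfl
  · simp only [cons']
    by_cases h : d = inv' c
    · rw [if_pos h, if_pos]; subst h; simp [inv']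
    · rw [if_neg h, if_neg]
      intro ⟨h1, h2⟩; exact h (by cases d; cases c; simp_all [inv'])


/-- length difference of double cons on a list with ≥ 2 elements -/
def dd (c₁ c₂ p q : Ltr) : ℤ :=
  if p = inv' c₂ then (if q = inv' c₁ then -2 else 0)
  else if c₂ = inv' c₁ then 0 else 2

lemma len_cc (c₁ c₂ p q : Ltr) (t : List Ltr) :
    ((cons' c₁ (cons' c₂ (p :: q :: t))).length : ℤ) = (p :: q :: t).length + dd c₁ c₂ p q := by
  show ((cons' c₁ (if p = inv' c₂ then q :: t else c₂ :: p :: q :: t)).length : ℤ) = _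
  unfold dd
  by_cases h : p = inv' c₂
  · rw [if_pos h, if_pos h]
    show ((if q = inv' c₁ then t else c₁ :: q :: t).length : ℤ) = _
    by_cases h2 : q = inv' c₁
    · rw [if_pos h2, if_pos h2]; simp; ring
    · rw [if_neg h2, if_neg h2]; simp
  · rw [if_neg h, if_neg h]
    show ((if c₂ = inv' c₁ then p :: q :: t else c₁ :: c₂ :: p :: q :: t).length : ℤ) = _
    by_cases h2 : c₂ = inv' c₁
    · rw [if_pos h2, if_pos h2]; simp
    · rw [if_neg h2, if_neg h2]; simp; ring

def dd1 (c₁ c₂ p : Ltr) : ℤ :=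
  if p = inv' c₂ then 0 else if c₂ = inv' c₁ then 0 else 2

lemma len_cc1 (c₁ c₂ p : Ltr) :
    ((cons' c₁ (cons' c₂ [p])).length : ℤ) = 1 + dd1 c₁ c₂ p := by
  show ((cons' c₁ (if p = inv' c₂ then [] else [c₂, p])).length : ℤ) = _
  unfold dd1
  by_cases h : p = inv' c₂
  · rw [if_pos h, if_pos h]; rfl
  · rw [if_neg h, if_neg h]
    show ((if c₂ = inv' c₁ then [p] else [c₁, c₂, p]).length : ℤ) = _
    by_cases h2 : c₂ = inv' c₁
    · rw [if_pos h2, if_pos h2]; rfl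
    · rw [if_neg h2, if_neg h2]; rfl

def dd0 (c₁ c₂ : Ltr) : ℤ := if c₂ = inv' c₁ then 0 else 2

lemma len_cc0 (c₁ c₂ : Ltr) :
    ((cons' c₁ (cons' c₂ [])).length : ℤ) = 0 + dd0 c₁ c₂ := by
  show ((cons' c₁ [c₂]).length : ℤ) = _
  show ((if c₂ = inv' c₁ then [] else [c₁, c₂]).length : ℤ) = _
  unfold dd0
  by_cases h2 : c₂ = inv' c₁
  · rw [if_pos h2, if_pos h2]; rfl
  · rw [if_neg h2, if_neg h2]; rfl

lemma cons'_cons'_middle (c₁ c₂ x y : Ltr) (M : List Ltr) :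
    ∃ P, cons' c₁ (cons' c₂ (x :: y :: M)) = P ++ M := by
  show ∃ P, cons' c₁ (if x = inv' c₂ then y :: M else c₂ :: x :: y :: M) = P ++ M
  by_cases h : x = inv' c₂
  · rw [if_pos h]
    show ∃ P, (if y = inv' c₁ then M else c₁ :: y :: M) = P ++ M
    by_cases h2 : y = inv' c₁
    · exact ⟨[], by rw [if_pos h2]; rfl⟩
    · exact ⟨[c₁, y], by rw [if_neg h2]; rfl⟩
  · rw [if_neg h]
    show ∃ P, (if c₂ = inv' c₁ then x :: y :: M else c₁ :: c₂ :: x :: y :: M) = P ++ M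
    by_cases h2 : c₂ = inv' c₁
    · exact ⟨[x, y], by rw [if_pos h2]; rfl⟩
    · exact ⟨[c₁, c₂, x, y], by rw [if_neg h2]; rfl⟩

lemma len_cons'_or (c : Ltr) (L : List Ltr) :
    ((cons' c L).length : ℤ) = L.length + 1 ∨ ((cons' c L).length : ℤ) = L.length - 1 := by
  rcases L with _ | ⟨d, t⟩
  · left; rfl
  · by_cases h : d = inv' c
    · right
      show ((if d = inv' c then t else c :: d :: t).length : ℤ) = _
      rw [if_pos h]; push_cast [List.length_cons]; ring
    · left
      show ((if d = inv' c then t else c :: d :: t).length : ℤ) = _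
      rw [if_neg h]; push_cast [List.length_cons]; ring



-- letters
def la : Ltr := (0, true)
def lA : Ltr := (0, false)
def lb : Ltr := (1, true)
def lB : Ltr := (1, false)

-- the six left 2-letter words (c₁, c₂) (word = c₁ c₂): AA aa BA Ba Ab ab
-- the six right-inverse 2-letter words (d₁, d₂): BB bb AB Ab Ba ba
lemma cleanBound2 : ∀ p q : Ltr,
    qpow (dd lA lA p q) + qpow (dd la la p q) + qpow (dd lB lA p q) +
    qpow (dd lB la p q) + qpow (dd lA lb p q) + qpow (dd la lb p q) ≤ 10 := by decide

lemma dirtyBound2 : ∀ p q : Ltr,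
    qpow (dd lB lB p q) + qpow (dd lb lb p q) + qpow (dd lA lB p q) +
    qpow (dd lA lb p q) + qpow (dd lB la p q) + qpow (dd lb la p q) ≤ 10 := by decide

lemma cleanBound1 : ∀ p : Ltr,
    qpow (dd1 lA lA p) + qpow (dd1 la la p) + qpow (dd1 lB lA p) +
    qpow (dd1 lB la p) + qpow (dd1 lA lb p) + qpow (dd1 la lb p) ≤ 10 := by decide

lemma cleanBound0 :
    qpow (dd0 lA lA) + qpow (dd0 la la) + qpow (dd0 lB lA) +
    qpow (dd0 lB la) + qpow (dd0 lA lb) + qpow (dd0 la lb) ≤ 10 := by decide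

open FreeGroup in
def qd (U V L : List Ltr) : ℤ :=
  qpow (((reduce (U ++ L ++ V)).length : ℤ) - ((reduce (U ++ L)).length : ℤ))

def qdirty (L : List Ltr) : ℤ :=
  qd [lA,lA] [lb,lb] L + qd [la,la] [lB,lB] L + qd [lB,lA] [lb,la] L +
  qd [lB,la] [lB,la] L + qd [lA,lb] [lA,lb] L + qd [la,lb] [lA,lB] L

lemma dirtySmall0 : qdirty [] ≤ 11 := by decide
lemma dirtySmall1 : ∀ c₁ : Ltr, qdirty [c₁] ≤ 11 := by decide
lemma dirtySmall2 : ∀ c₁ c₂ : Ltr, qdirty [c₁, c₂] ≤ 11 := by decide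
lemma dirtySmall3 : ∀ c₁ c₂ c₃ : Ltr, qdirty [c₁, c₂, c₃] ≤ 11 := by decide


open FreeGroup

def nZ (x : F2) : ℤ := (FreeGroup.norm x : ℤ)

lemma nZ_toWord (x : F2) : nZ x = (x.toWord.length : ℤ) := rfl

lemma mk_two (c₁ c₂ : Ltr) : (FreeGroup.mk [c₁, c₂] : F2) = FreeGroup.mk [c₁] * FreeGroup.mk [c₂] := by
  rw [FreeGroup.mul_mk]; rfl

lemma nZ_two_mul (c₁ c₂ : Ltr) (x : F2) :
    nZ (FreeGroup.mk [c₁, c₂] * x) = ((cons' c₁ (cons' c₂ x.toWord)).length : ℤ) := by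
  rw [mk_two, mul_assoc, nZ_toWord, toWord_mk_mul, toWord_mk_mul]

lemma dd_cases (c₁ c₂ p q : Ltr) : dd c₁ c₂ p q = -2 ∨ dd c₁ c₂ p q = 0 ∨ dd c₁ c₂ p q = 2 := by
  unfold dd; split_ifs <;> simp

lemma dd1_cases (c₁ c₂ p : Ltr) : dd1 c₁ c₂ p = -2 ∨ dd1 c₁ c₂ p = 0 ∨ dd1 c₁ c₂ p = 2 := by
  unfold dd1; split_ifs <;> simp

lemma dd0_cases (c₁ c₂ : Ltr) : dd0 c₁ c₂ = -2 ∨ dd0 c₁ c₂ = 0 ∨ dd0 c₁ c₂ = 2 := by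
  unfold dd0; split_ifs <;> simp

theorem cleanF (k : F2) :
    FF (2*(nZ (.mk [lA,lA] * k) - nZ k)) + FF (2*(nZ (.mk [la,la] * k) - nZ k)) +
    FF (2*(nZ (.mk [lB,lA] * k) - nZ k)) + FF (2*(nZ (.mk [lB,la] * k) - nZ k)) +
    FF (2*(nZ (.mk [lA,lb] * k) - nZ k)) + FF (2*(nZ (.mk [la,lb] * k) - nZ k)) ≤ 5 := by
  rcases e : k.toWord with _ | ⟨p, t1⟩
  · have key : ∀ c₁ c₂ : Ltr, FF (2*(nZ (.mk [c₁,c₂] * k) - nZ k)) = (qpow (dd0 c₁ c₂) : ℝ)/2 := by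
      intro c₁ c₂
      rw [nZ_two_mul, nZ_toWord, e, len_cc0]
      rw [show ((0 : ℤ) + dd0 c₁ c₂ - (([] : List Ltr).length : ℤ)) = dd0 c₁ c₂ by simp]
      exact FFq (dd0_cases c₁ c₂)
    rw [key, key, key, key, key, key]
    have h := cleanBound0
    have h' := (Int.cast_le (R := ℝ)).mpr h
    push_cast at h'
    linarith
  rcases t1 with _ | ⟨q, t⟩
  · have key : ∀ c₁ c₂ : Ltr, FF (2*(nZ (.mk [c₁,c₂] * k) - nZ k)) = (qpow (dd1 c₁ c₂ p) : ℝ)/2 := by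
      intro c₁ c₂
      rw [nZ_two_mul, nZ_toWord, e, len_cc1]
      rw [show ((1 : ℤ) + dd1 c₁ c₂ p - (([p] : List Ltr).length : ℤ)) = dd1 c₁ c₂ p by simp]
      exact FFq (dd1_cases c₁ c₂ p)
    rw [key, key, key, key, key, key]
    have h := cleanBound1 p
    have h' := (Int.cast_le (R := ℝ)).mpr h
    push_cast at h'
    linarith
  · have key : ∀ c₁ c₂ : Ltr, FF (2*(nZ (.mk [c₁,c₂] * k) - nZ k)) = (qpow (dd c₁ c₂ p q) : ℝ)/2 := by
      intro c₁ c₂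
      rw [nZ_two_mul, nZ_toWord, e, len_cc]
      rw [show (((p :: q :: t).length : ℤ) + dd c₁ c₂ p q - ((p :: q :: t).length : ℤ)) = dd c₁ c₂ p q by ring]
      exact FFq (dd_cases c₁ c₂ p q)
    rw [key, key, key, key, key, key]
    have h := cleanBound2 p q
    have h' := (Int.cast_le (R := ℝ)).mpr h
    push_cast at h'
    linarith


open FreeGroup

lemma inv_mk_two (d₁ d₂ : Ltr) : (FreeGroup.mk [d₁, d₂] : F2)⁻¹ = FreeGroup.mk [inv' d₂, inv' d₁] := by
  rw [FreeGroup.inv_mk]; rfl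

lemma nZ_inv (x : F2) : nZ x⁻¹ = nZ x := by simp [nZ]

lemma nZ_mk (W : List Ltr) : nZ (FreeGroup.mk W) = ((FreeGroup.reduce W).length : ℤ) := by
  rw [nZ_toWord, FreeGroup.toWord_mk]

lemma right2_delta (d₁ d₂ : Ltr) (y : F2) :
    nZ (y * .mk [d₁, d₂]) - nZ y = ((cons' (inv' d₂) (cons' (inv' d₁) y⁻¹.toWord)).length : ℤ)
      - (y⁻¹.toWord.length : ℤ) := by
  rw [← nZ_inv (y * _), mul_inv_rev, inv_mk_two, nZ_two_mul, ← nZ_inv y, nZ_toWord]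

lemma right2_delta_cases (d₁ d₂ : Ltr) (y : F2) :
    nZ (y * .mk [d₁, d₂]) - nZ y = -2 ∨ nZ (y * .mk [d₁, d₂]) - nZ y = 0 ∨
      nZ (y * .mk [d₁, d₂]) - nZ y = 2 := by
  rw [right2_delta]
  rcases len_cons'_or (inv' d₂) (cons' (inv' d₁) y⁻¹.toWord) with h1 | h1 <;>
    rcases len_cons'_or (inv' d₁) y⁻¹.toWord with h2 | h2 <;> rw [h1, h2] <;> omega

lemma invRev_append (A B : List Ltr) :
    FreeGroup.invRev (A ++ B) = FreeGroup.invRev B ++ FreeGroup.invRev A := by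
  simp [FreeGroup.invRev]

lemma exists_append2 (t : List Ltr) (h : 2 ≤ t.length) : ∃ M r s, t = M ++ [r, s] := by
  rcases er : t.reverse with _ | ⟨s, t2⟩
  · exfalso; rw [← t.reverse_reverse, er] at h; simp at h
  rcases t2 with _ | ⟨r, M'⟩
  · exfalso; rw [← t.reverse_reverse, er] at h; simp at h
  exact ⟨M'.reverse, r, s, by rw [← t.reverse_reverse, er]; simp⟩

theorem dirtyF (k : F2) :
    FF (2*(nZ (.mk [lA,lA] * k * .mk [lb,lb]) - nZ (.mk [lA,lA] * k))) +
    FF (2*(nZ (.mk [la,la] * k * .mk [lB,lB]) - nZ (.mk [la,la] * k))) +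
    FF (2*(nZ (.mk [lB,lA] * k * .mk [lb,la]) - nZ (.mk [lB,lA] * k))) +
    FF (2*(nZ (.mk [lB,la] * k * .mk [lB,la]) - nZ (.mk [lB,la] * k))) +
    FF (2*(nZ (.mk [lA,lb] * k * .mk [lA,lb]) - nZ (.mk [lA,lb] * k))) +
    FF (2*(nZ (.mk [la,lb] * k * .mk [lA,lB]) - nZ (.mk [la,lb] * k))) ≤ 11/2 := by
  by_cases hlen : k.toWord.length ≤ 3
  · -- small case: use the decided bounds on qdirty
    have key : ∀ (c₁ c₂ d₁ d₂ : Ltr),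
        FF (2*(nZ (.mk [c₁,c₂] * k * .mk [d₁,d₂]) - nZ (.mk [c₁,c₂] * k))) =
          ((qd [c₁,c₂] [d₁,d₂] k.toWord : ℤ) : ℝ)/2 := by
      intro c₁ c₂ d₁ d₂
      have hq : qd [c₁,c₂] [d₁,d₂] k.toWord =
          qpow (nZ (.mk [c₁,c₂] * k * .mk [d₁,d₂]) - nZ (.mk [c₁,c₂] * k)) := by
        unfold qd
        congr 1
        conv_rhs => rw [← FreeGroup.mk_toWord (x := k)]
        rw [FreeGroup.mul_mk, FreeGroup.mul_mk, nZ_mk, nZ_mk]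
      rw [hq]
      exact FFq (right2_delta_cases d₁ d₂ _)
    rw [key, key, key, key, key, key]
    have h : qdirty k.toWord ≤ 11 := by
      rcases e : k.toWord with _ | ⟨a, _ | ⟨b, _ | ⟨c, _ | ⟨d, t⟩⟩⟩⟩
      · exact dirtySmall0
      · exact dirtySmall1 a
      · exact dirtySmall2 a b
      · exact dirtySmall3 a b c
      · exfalso; rw [e] at hlen; simp at hlen; omega
    unfold qdirty at h
    have h' := (Int.cast_le (R := ℝ)).mpr h
    push_cast at h'

    linarith
  · -- big case: the last two letters of k govern everything
    push_neg at hlen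
    rcases e : k.toWord with _ | ⟨x, _ | ⟨y, t⟩⟩
    · exfalso; rw [e] at hlen; simp at hlen
    · exfalso; rw [e] at hlen; simp at hlen
    have ht : 2 ≤ t.length := by rw [e] at hlen; simp at hlen; omega
    obtain ⟨M, r, s, rfl⟩ := exists_append2 t ht
    have key : ∀ (c₁ c₂ d₁ d₂ : Ltr),
        FF (2*(nZ (.mk [c₁,c₂] * k * .mk [d₁,d₂]) - nZ (.mk [c₁,c₂] * k))) =
          (qpow (dd (inv' d₂) (inv' d₁) (inv' s) (inv' r)) : ℝ)/2 := by
      intro c₁ c₂ d₁ d₂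
      obtain ⟨P, hP⟩ := cons'_cons'_middle c₁ c₂ x y (M ++ [r, s])
      have hz : ((FreeGroup.mk [c₁,c₂] * k)⁻¹).toWord
          = inv' s :: inv' r :: (FreeGroup.invRev M ++ FreeGroup.invRev P) := by
        rw [FreeGroup.toWord_inv, mk_two, mul_assoc, toWord_mk_mul, toWord_mk_mul, e, hP,
          invRev_append, invRev_append]
        rfl
      rw [right2_delta d₁ d₂ _, hz, len_cc]
      rw [show ∀ z : ℤ, z + dd (inv' d₂) (inv' d₁) (inv' s) (inv' r) - z
            = dd (inv' d₂) (inv' d₁) (inv' s) (inv' r) from fun z => by ring]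
      exact FFq (dd_cases _ _ _ _)
    rw [key, key, key, key, key, key]
    have h := dirtyBound2 (inv' s) (inv' r)
    have h' := (Int.cast_le (R := ℝ)).mpr h
    push_cast at h'
    show _ ≤ (11:ℝ)/2
    -- check the pairs line up: (lB,lB),(lb,lb),(lA,lB),(lA,lb),(lB,la),(lb,la)
    have e1 : inv' lb = lB := rfl
    have e2 : inv' lB = lb := rfl
    have e3 : inv' la = lA := rfl
    have e4 : inv' lA = la := rfl
    rw [e1, e2, e3, e4] at *
    linarith


open FreeGroup

@[simp] lemma inv'_la : inv' la = lA := rfl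
@[simp] lemma inv'_lA : inv' lA = la := rfl
@[simp] lemma inv'_lb : inv' lb = lB := rfl
@[simp] lemma inv'_lB : inv' lB = lb := rfl

lemma inv_mk_one (c : Ltr) : (FreeGroup.mk [c] : F2)⁻¹ = FreeGroup.mk [inv' c] := by
  rw [FreeGroup.inv_mk]; rfl

/-- left translators of the three permutations -/
noncomputable def Wl : Fin 3 → F2 := ![.mk [lA], .mk [la], .mk [lB]]
/-- right translators -/
noncomputable def Wr : Fin 3 → F2 := ![.mk [lb], .mk [lB], .mk [la]]

theorem Dk_bound (k : F2) :
    ∑ i : Fin 3, ∑ j : Fin 3,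
      FF (nZ ((Wl j) * ((Wl i)⁻¹ * k * (Wr i)⁻¹) * (Wr j)) - nZ k) ≤ 33/4 := by
  have amgm : ∀ u v : F2, FF (nZ (u * k * v) - nZ k) ≤
      (FF (2*(nZ (u*k) - nZ k)) + FF (2*(nZ (u*k*v) - nZ (u*k))))/2 := by
    intro u v
    have h := FF_amgm (nZ (u*k) - nZ k) (nZ (u*k*v) - nZ (u*k))
    rw [show (nZ (u*k) - nZ k) + (nZ (u*k*v) - nZ (u*k)) = nZ (u*k*v) - nZ k by ring] at h
    exact h
  have hdiag : ∀ a b : F2, a * (a⁻¹ * k * b⁻¹) * b = k := by intro a b; group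
  rw [Fin.sum_univ_three]
  rw [Fin.sum_univ_three, Fin.sum_univ_three, Fin.sum_univ_three]
  simp only [Wl, Wr, Matrix.cons_val_zero, Matrix.cons_val_one, Matrix.head_cons,
    Matrix.cons_val_two, Matrix.tail_cons]
  rw [hdiag, hdiag, hdiag]
  have h01 : FreeGroup.mk [la] * ((FreeGroup.mk [lA])⁻¹ * k * (FreeGroup.mk [lb])⁻¹) * FreeGroup.mk [lB]
      = FreeGroup.mk [la,la] * k * FreeGroup.mk [lB,lB] := by
    simp only [inv_mk_one, inv'_la, inv'_lA, inv'_lb, inv'_lB, mk_two, mul_assoc]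
  have h02 : FreeGroup.mk [lB] * ((FreeGroup.mk [lA])⁻¹ * k * (FreeGroup.mk [lb])⁻¹) * FreeGroup.mk [la]
      = FreeGroup.mk [lB,la] * k * FreeGroup.mk [lB,la] := by
    simp only [inv_mk_one, inv'_la, inv'_lA, inv'_lb, inv'_lB, mk_two, mul_assoc]
  have h10 : FreeGroup.mk [lA] * ((FreeGroup.mk [la])⁻¹ * k * (FreeGroup.mk [lB])⁻¹) * FreeGroup.mk [lb]
      = FreeGroup.mk [lA,lA] * k * FreeGroup.mk [lb,lb] := by
    simp only [inv_mk_one, inv'_la, inv'_lA, inv'_lb, inv'_lB, mk_two, mul_assoc]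
  have h12 : FreeGroup.mk [lB] * ((FreeGroup.mk [la])⁻¹ * k * (FreeGroup.mk [lB])⁻¹) * FreeGroup.mk [la]
      = FreeGroup.mk [lB,lA] * k * FreeGroup.mk [lb,la] := by
    simp only [inv_mk_one, inv'_la, inv'_lA, inv'_lb, inv'_lB, mk_two, mul_assoc]
  have h20 : FreeGroup.mk [lA] * ((FreeGroup.mk [lB])⁻¹ * k * (FreeGroup.mk [la])⁻¹) * FreeGroup.mk [lb]
      = FreeGroup.mk [lA,lb] * k * FreeGroup.mk [lA,lb] := by
    simp only [inv_mk_one, inv'_la, inv'_lA, inv'_lb, inv'_lB, mk_two, mul_assoc]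
  have h21 : FreeGroup.mk [la] * ((FreeGroup.mk [lB])⁻¹ * k * (FreeGroup.mk [la])⁻¹) * FreeGroup.mk [lB]
      = FreeGroup.mk [la,lb] * k * FreeGroup.mk [lA,lB] := by
    simp only [inv_mk_one, inv'_la, inv'_lA, inv'_lb, inv'_lB, mk_two, mul_assoc]
  rw [h01, h02, h10, h12, h20, h21, sub_self, FF_zero]
  have a01 := amgm (FreeGroup.mk [la,la]) (FreeGroup.mk [lB,lB])
  have a02 := amgm (FreeGroup.mk [lB,la]) (FreeGroup.mk [lB,la])
  have a10 := amgm (FreeGroup.mk [lA,lA]) (FreeGroup.mk [lb,lb])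
  have a12 := amgm (FreeGroup.mk [lB,lA]) (FreeGroup.mk [lb,la])
  have a20 := amgm (FreeGroup.mk [lA,lb]) (FreeGroup.mk [lA,lb])
  have a21 := amgm (FreeGroup.mk [la,lb]) (FreeGroup.mk [lA,lB])
  have hc := cleanF k
  have hd := dirtyF k
  linarith


open FreeGroup

/-- the three permutations of F₂ : h ↦ Wl i * h * Wr i -/
noncomputable def EE : Fin 3 → (F2 ≃ F2) := fun i =>
  (Equiv.mulLeft (Wl i)).trans (Equiv.mulRight (Wr i))

lemma EE_apply (i : Fin 3) (h : F2) : EE i h = Wl i * h * Wr i := rfl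

lemma EE_symm_apply (i : Fin 3) (k : F2) : (EE i).symm k = (Wl i)⁻¹ * k * (Wr i)⁻¹ := by
  simp [EE, mul_assoc]

lemma nZ_Wl (i : Fin 3) : nZ (Wl i) = 1 := by fin_cases i <;> rfl
lemma nZ_Wr (i : Fin 3) : nZ (Wr i) = 1 := by fin_cases i <;> rfl

lemma nZ_mul_le (x y : F2) : nZ (x * y) ≤ nZ x + nZ y := by
  have := FreeGroup.norm_mul_le x y
  unfold nZ; exact_mod_cast this

lemma EE_diff_ge (i j : Fin 3) (h : F2) : -4 ≤ nZ (EE j h) - nZ (EE i h) := by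
  have key : EE i h = ((Wl i) * (Wl j)⁻¹) * (EE j h) * ((Wr j)⁻¹ * (Wr i)) := by
    rw [EE_apply, EE_apply]; group
  have h1 : nZ (EE i h) ≤ nZ ((Wl i) * (Wl j)⁻¹ * (EE j h)) + nZ ((Wr j)⁻¹ * (Wr i)) := by
    rw [key]; exact nZ_mul_le _ _
  have h2 : nZ ((Wl i) * (Wl j)⁻¹ * (EE j h)) ≤ nZ ((Wl i) * (Wl j)⁻¹) + nZ (EE j h) :=
    nZ_mul_le _ _
  have h3 : nZ ((Wl i) * (Wl j)⁻¹) ≤ nZ (Wl i) + nZ ((Wl j)⁻¹) := nZ_mul_le _ _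
  have h4 : nZ ((Wr j)⁻¹ * (Wr i)) ≤ nZ ((Wr j)⁻¹) + nZ (Wr i) := nZ_mul_le _ _
  rw [nZ_inv, nZ_Wl, nZ_Wl] at h3
  rw [nZ_inv, nZ_Wr, nZ_Wr] at h4
  linarith

lemma FF_le_two {d : ℤ} (hd : -4 ≤ d) : FF d ≤ 2 := by
  have := FF_anti hd
  rwa [FF_m4] at this

lemma FF_mul_FF_neg (m : ℤ) : FF m * FF (-m) = 1 := by
  rw [← FF_add, add_neg_cancel, FF_zero]

/-- weighted Cauchy-Schwarz for three terms -/
lemma cs3 (a : Fin 3 → ℝ) (t : Fin 3 → Fin 3 → ℝ) (hp : ∀ i j, 0 < t i j)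
    (hinv : ∀ i j, t i j * t j i = 1) :
    (∑ i, a i)^2 ≤ ∑ i, ∑ j, t i j * a i ^ 2 := by
  have key : ∀ i j, a i * a j ≤ (t i j * a i ^ 2 + t j i * a j ^ 2) / 2 := by
    intro i j
    have h1 := hp i j
    have h2 := hp j i
    have h3 := hinv i j
    nlinarith [sq_nonneg (t i j * a i - a j), sq_nonneg (a i - a j), mul_pos h1 h2]
  calc (∑ i, a i)^2 = ∑ i, ∑ j, a i * a j := by
        rw [sq, Finset.sum_mul_sum]
    _ ≤ ∑ i, ∑ j, (t i j * a i ^ 2 + t j i * a j ^ 2) / 2 := by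
        apply Finset.sum_le_sum; intro i _
        apply Finset.sum_le_sum; intro j _
        exact key i j
    _ = ((∑ i, ∑ j, t i j * a i ^ 2) + (∑ i, ∑ j, t j i * a j ^ 2)) / 2 := by
        simp only [Finset.sum_add_distrib, ← Finset.sum_div]
    _ = ∑ i, ∑ j, t i j * a i ^ 2 := by
        have hsw : (∑ i, ∑ j, t j i * a j ^ 2) = ∑ i, ∑ j, t i j * a i ^ 2 :=
          Finset.sum_comm
        rw [hsw]; ring


open FreeGroup

-- relate the problem's generators to list representatives
lemma g1_eq : g₁ = FreeGroup.mk [la] := rfl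
lemma g2_eq : g₂ = FreeGroup.mk [lb] := rfl
lemma g1_inv_eq : g₁⁻¹ = FreeGroup.mk [lA] := by rw [g1_eq, inv_mk_one, inv'_la]
lemma g2_inv_eq : g₂⁻¹ = FreeGroup.mk [lB] := by rw [g2_eq, inv_mk_one, inv'_lb]

lemma norm_sq_eq (f : l2F₂) : ‖f‖^2 = ∑' h, ‖f h‖^2 := by
  have h := lp.norm_rpow_eq_tsum (p := 2) (by norm_num) f
  rw [show ((2:ℝ≥0∞).toReal) = ((2:ℕ):ℝ) from by norm_num] at h
  simp only [Real.rpow_natCast] at h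
  exact h

lemma summable_sq (f : l2F₂) : Summable (fun h => ‖f h‖^2) := by
  have h := (lp.memℓp f).summable (p := 2) (by norm_num)
  rw [show ((2:ℝ≥0∞).toReal) = ((2:ℕ):ℝ) from by norm_num] at h
  simp only [Real.rpow_natCast] at h
  exact h

lemma B_apply (ξ : l2F₂) (h : F₂) :
    ((L g₁ * R g₂ + L g₁⁻¹ * R g₂⁻¹ + L g₂ * R g₁) ξ) h
      = ξ (EE 0 h) + ξ (EE 1 h) + ξ (EE 2 h) := by
  have e0 : EE 0 h = g₁⁻¹ * h * g₂ := by
    rw [EE_apply]; rw [g1_inv_eq, g2_eq]; rfl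
  have e1 : EE 1 h = (g₁⁻¹)⁻¹ * h * g₂⁻¹ := by
    rw [EE_apply, inv_inv, g1_eq, g2_inv_eq]; rfl
  have e2 : EE 2 h = g₂⁻¹ * h * g₁ := by
    rw [EE_apply]; rw [g2_inv_eq, g1_eq]; rfl
  rw [ContinuousLinearMap.add_apply, ContinuousLinearMap.add_apply,
    lp.coeFn_add, lp.coeFn_add, Pi.add_apply, Pi.add_apply,
    ContinuousLinearMap.mul_apply, ContinuousLinearMap.mul_apply,
    ContinuousLinearMap.mul_apply, L_def, R_def, L_def, R_def, L_def, R_def,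
    e0, e1, e2]

lemma summable_theta (ξ : l2F₂) (i j : Fin 3) :
    Summable (fun h : F₂ => FF (nZ (EE j h) - nZ (EE i h)) * ‖ξ (EE i h)‖^2) := by
  have base : Summable (fun h : F₂ => ‖ξ (EE i h)‖^2) :=
    ((EE i).summable_iff (f := fun k => ‖ξ k‖^2)).mpr (summable_sq ξ)
  apply Summable.of_nonneg_of_le
    (fun h => mul_nonneg (FF_pos _).le (sq_nonneg _))
    (fun h => mul_le_mul_of_nonneg_right (FF_le_two (EE_diff_ge i j h)) (sq_nonneg _))
    (base.mul_left 2)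

lemma summable_theta' (ξ : l2F₂) (i j : Fin 3) :
    Summable (fun k : F₂ => FF (nZ (EE j ((EE i).symm k)) - nZ k) * ‖ξ k‖^2) := by
  apply Summable.of_nonneg_of_le
    (fun h => mul_nonneg (FF_pos _).le (sq_nonneg _))
    (fun k => mul_le_mul_of_nonneg_right ?_ (sq_nonneg _))
    ((summable_sq ξ).mul_left 2)
  have hk : nZ k = nZ (EE i ((EE i).symm k)) := by rw [Equiv.apply_symm_apply]
  rw [hk]
  exact FF_le_two (EE_diff_ge i j ((EE i).symm k))

set_option maxHeartbeats 1000000 in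
lemma B_norm_sq (ξ : l2F₂) :
    ‖(L g₁ * R g₂ + L g₁⁻¹ * R g₂⁻¹ + L g₂ * R g₁) ξ‖^2 ≤ (33/4) * ‖ξ‖^2 := by
  rw [norm_sq_eq, norm_sq_eq]
  have step1 : ∑' h, ‖((L g₁ * R g₂ + L g₁⁻¹ * R g₂⁻¹ + L g₂ * R g₁) ξ) h‖^2
      ≤ ∑' h, ∑ p : Fin 3 × Fin 3,
          FF (nZ (EE p.2 h) - nZ (EE p.1 h)) * ‖ξ (EE p.1 h)‖^2 := by
    refine Summable.tsum_le_tsum (fun h => ?_) (summable_sq _) (summable_sum (fun p _ => summable_theta ξ p.1 p.2))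
    rw [B_apply]
    have tri : ‖ξ (EE 0 h) + ξ (EE 1 h) + ξ (EE 2 h)‖ ≤ ∑ i : Fin 3, ‖ξ (EE i h)‖ := by
      rw [Fin.sum_univ_three]; exact norm_add₃_le
    have sq1 : ‖ξ (EE 0 h) + ξ (EE 1 h) + ξ (EE 2 h)‖^2 ≤ (∑ i : Fin 3, ‖ξ (EE i h)‖)^2 :=
      pow_le_pow_left₀ (norm_nonneg _) tri 2
    refine le_trans sq1 ?_
    rw [Fintype.sum_prod_type]
    exact cs3 (fun i => ‖ξ (EE i h)‖) (fun i j => FF (nZ (EE j h) - nZ (EE i h)))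
      (fun i j => FF_pos _)
      (fun i j => by
        rw [← FF_add, show (nZ (EE j h) - nZ (EE i h)) + (nZ (EE i h) - nZ (EE j h)) = 0 by ring,
          FF_zero])
  have step2 : ∑' h, ∑ p : Fin 3 × Fin 3,
      FF (nZ (EE p.2 h) - nZ (EE p.1 h)) * ‖ξ (EE p.1 h)‖^2
      = ∑ p : Fin 3 × Fin 3, ∑' h,
          FF (nZ (EE p.2 h) - nZ (EE p.1 h)) * ‖ξ (EE p.1 h)‖^2 :=
    Summable.tsum_finsetSum (fun p _ => summable_theta ξ p.1 p.2)
  have step3 : ∀ p : Fin 3 × Fin 3,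
      (∑' h, FF (nZ (EE p.2 h) - nZ (EE p.1 h)) * ‖ξ (EE p.1 h)‖^2)
      = ∑' k, FF (nZ (EE p.2 ((EE p.1).symm k)) - nZ k) * ‖ξ k‖^2 := by
    intro p
    rw [← Equiv.tsum_eq (EE p.1) (fun k => FF (nZ (EE p.2 ((EE p.1).symm k)) - nZ k) * ‖ξ k‖^2)]
    apply tsum_congr; intro h
    rw [Equiv.symm_apply_apply]
  have step4 : ∑ p : Fin 3 × Fin 3, ∑' k,
      FF (nZ (EE p.2 ((EE p.1).symm k)) - nZ k) * ‖ξ k‖^2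
      = ∑' k, ∑ p : Fin 3 × Fin 3,
          FF (nZ (EE p.2 ((EE p.1).symm k)) - nZ k) * ‖ξ k‖^2 :=
    (Summable.tsum_finsetSum (fun p _ => summable_theta' ξ p.1 p.2)).symm
  have step5 : ∑' k, ∑ p : Fin 3 × Fin 3,
      FF (nZ (EE p.2 ((EE p.1).symm k)) - nZ k) * ‖ξ k‖^2
      ≤ ∑' k, (33/4) * ‖ξ k‖^2 := by
    apply Summable.tsum_le_tsum _ (summable_sum (fun p _ => summable_theta' ξ p.1 p.2))
      ((summable_sq ξ).mul_left _)
    intro k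
    rw [← Finset.sum_mul]
    apply mul_le_mul_of_nonneg_right _ (sq_nonneg _)
    have hD := Dk_bound k
    rw [Fintype.sum_prod_type]
    calc ∑ i : Fin 3, ∑ j : Fin 3, FF (nZ (EE j ((EE i).symm k)) - nZ k)
        = ∑ i : Fin 3, ∑ j : Fin 3,
            FF (nZ ((Wl j) * ((Wl i)⁻¹ * k * (Wr i)⁻¹) * (Wr j)) - nZ k) := by
          apply Finset.sum_congr rfl; intro i _
          apply Finset.sum_congr rfl; intro j _
          rw [EE_symm_apply, EE_apply]
      _ ≤ 33/4 := hD
  have step6 : ∑' k, (33/4 : ℝ) * ‖ξ k‖^2 = (33/4) * ∑' k, ‖ξ k‖^2 := tsum_mul_left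
  calc ∑' h, ‖((L g₁ * R g₂ + L g₁⁻¹ * R g₂⁻¹ + L g₂ * R g₁) ξ) h‖^2
      ≤ _ := step1
    _ = _ := step2
    _ = ∑ p : Fin 3 × Fin 3, ∑' k,
          FF (nZ (EE p.2 ((EE p.1).symm k)) - nZ k) * ‖ξ k‖^2 :=
        Finset.sum_congr rfl (fun p _ => step3 p)
    _ = _ := step4
    _ ≤ _ := step5
    _ = _ := step6

lemma B_opNorm : ‖L g₁ * R g₂ + L g₁⁻¹ * R g₂⁻¹ + L g₂ * R g₁‖ ≤ 29/10 := by
  apply ContinuousLinearMap.opNorm_le_bound _ (by norm_num)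
  intro ξ
  have h := B_norm_sq ξ
  nlinarith [norm_nonneg ((L g₁ * R g₂ + L g₁⁻¹ * R g₂⁻¹ + L g₂ * R g₁) ξ), norm_nonneg ξ]

end Mag

namespace Mag

noncomputable def δe : l2F₂ := lp.single 2 (1 : F₂) (1 : ℂ)

lemma δe_apply (h : F₂) : δe h = if h = 1 then 1 else 0 := by
  by_cases hh : h = 1
  · subst hh; rw [if_pos rfl]; exact lp.single_apply_self (E := fun _ : F₂ => ℂ) 2 (1 : F₂) (1 : ℂ)
  · rw [if_neg hh]; exact lp.single_apply_ne (E := fun _ : F₂ => ℂ) 2 (1 : F₂) (1 : ℂ) hh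

lemma δe_norm : ‖δe‖ = 1 := by
  have h := lp.norm_single (E := fun _ : F₂ => ℂ) (p := 2) (by norm_num)
    (1 : F₂) (1 : ℂ)
  simpa [δe] using h

lemma conj_eq_one_iff (g h : F₂) : g⁻¹ * h * g = 1 ↔ h = 1 := by
  constructor
  · intro he
    have := congrArg (fun z => g * z * g⁻¹) he
    simpa [mul_assoc] using this
  · rintro rfl; simp

lemma T_fixes : (1 + L g₂ * R g₂ + L g₂⁻¹ * R g₂⁻¹ + L g₁ * R g₁) δe = (4 : ℂ) • δe := by
  apply lp.ext
  funext h
  have key : ∀ g : F₂, δe (g⁻¹ * h * g) = δe h := by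
    intro g
    rw [δe_apply, δe_apply]
    by_cases hh : h = 1
    · rw [if_pos hh, if_pos (by rw [(conj_eq_one_iff g h)]; exact hh)]
    · rw [if_neg hh, if_neg (by rw [(conj_eq_one_iff g h)]; exact hh)]
  have lhs : ((1 + L g₂ * R g₂ + L g₂⁻¹ * R g₂⁻¹ + L g₁ * R g₁) δe) h
      = δe h + δe (g₂⁻¹ * h * g₂) + δe ((g₂⁻¹)⁻¹ * h * g₂⁻¹) + δe (g₁⁻¹ * h * g₁) := by
    rw [ContinuousLinearMap.add_apply, ContinuousLinearMap.add_apply,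
      ContinuousLinearMap.add_apply, lp.coeFn_add, lp.coeFn_add, lp.coeFn_add,
      Pi.add_apply, Pi.add_apply, Pi.add_apply, ContinuousLinearMap.one_apply,
      ContinuousLinearMap.mul_apply, ContinuousLinearMap.mul_apply,
      ContinuousLinearMap.mul_apply, L_def, R_def, L_def, R_def, L_def, R_def]
  rw [lhs, key g₂, key g₁, inv_inv]
  have key2 : δe (g₂ * h * g₂⁻¹) = δe h := by
    have := key g₂⁻¹; rwa [inv_inv] at this
  rw [key2]
  have : ((4 : ℂ) • δe) h = (4 : ℂ) * δe h := by
    rw [lp.coeFn_smul, Pi.smul_apply, smul_eq_mul]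
  rw [this]; ring

lemma diag_norm_ge : (4:ℝ) ≤ ‖(1 : l2F₂ →L[ℂ] l2F₂) + L g₂ * R g₂ + L g₂⁻¹ * R g₂⁻¹ + L g₁ * R g₁‖ := by
  have h1 : ‖(1 + L g₂ * R g₂ + L g₂⁻¹ * R g₂⁻¹ + L g₁ * R g₁ : l2F₂ →L[ℂ] l2F₂) δe‖
      ≤ ‖(1 : l2F₂ →L[ℂ] l2F₂) + L g₂ * R g₂ + L g₂⁻¹ * R g₂⁻¹ + L g₁ * R g₁‖ * ‖δe‖ :=
    ContinuousLinearMap.le_opNorm _ _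
  rw [T_fixes, norm_smul, δe_norm, mul_one, mul_one] at h1
  have h4 : ‖(4:ℂ)‖ = 4 := by
    rw [show (4:ℂ) = ((4:ℝ):ℂ) by norm_num, Complex.norm_real]; norm_num
  rw [h4] at h1
  exact h1

end Mag


/-- Inequality (2.8) of Example 2.6 of Magajna, "Pointwise approximation by elementary complete
contractions":
`‖1 + L_{g₂}R_{g₂} + L_{g₂⁻¹}R_{g₂⁻¹} + L_{g₁}R_{g₁}‖ >
 ‖1 + L_{g₁}R_{g₂} + L_{g₁⁻¹}R_{g₂⁻¹} + L_{g₂}R_{g₁}‖` on `ℓ²(F₂)`. -/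
theorem norm_diagonal_gt_norm_mixed :
    ‖(1 : l2F₂ →L[ℂ] l2F₂) + L g₂ * R g₂ + L g₂⁻¹ * R g₂⁻¹ + L g₁ * R g₁‖ >
      ‖(1 : l2F₂ →L[ℂ] l2F₂) + L g₁ * R g₂ + L g₁⁻¹ * R g₂⁻¹ + L g₂ * R g₁‖ := by

  have h1 := Mag.diag_norm_ge
  have h2 : ‖(1 : l2F₂ →L[ℂ] l2F₂) + L g₁ * R g₂ + L g₁⁻¹ * R g₂⁻¹ + L g₂ * R g₁‖ < 4 := by
    have e : (1 : l2F₂ →L[ℂ] l2F₂) + L g₁ * R g₂ + L g₁⁻¹ * R g₂⁻¹ + L g₂ * R g₁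
        = 1 + (L g₁ * R g₂ + L g₁⁻¹ * R g₂⁻¹ + L g₂ * R g₁) := by abel
    rw [e]
    calc ‖(1 : l2F₂ →L[ℂ] l2F₂) + (L g₁ * R g₂ + L g₁⁻¹ * R g₂⁻¹ + L g₂ * R g₁)‖
        ≤ ‖(1 : l2F₂ →L[ℂ] l2F₂)‖ + ‖L g₁ * R g₂ + L g₁⁻¹ * R g₂⁻¹ + L g₂ * R g₁‖ :=
          norm_add_le _ _
      _ ≤ 1 + 29/10 := by
          have := Mag.B_opNorm
          have h1le : ‖(1 : l2F₂ →L[ℂ] l2F₂)‖ ≤ 1 := ContinuousLinearMap.norm_id_le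
          linarith
      _ < 4 := by norm_num
  linarith

end
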